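/- Under monotonicity, the exclusion restriction, and the homogeneity null hypothesis H_00 (τ_j = τ_0 for every cluster j), the null distribution of the adjusted difference-in-means statistic T(τ_0) is exactly the permutation distribution: for every t ∈ ℝ, P( T(τ_0) ≤ t ) = |{ subsets s ⊆ {1,…,J}, |s| = m : (1/m)Σ_{j∈s} A_j(τ_0) − (1/(J−m))Σ_{j∉s} A_j(τ_0) ≤ t }| / C(J,m), where A_j(τ_0) = Σ_i Y_ji^(D_ji^(1)) − τ_0 Σ_i D_ji^(1) ( = Σ_i Y_ji^(D_ji^(0)) − τ_0 Σ_i D_ji^(0) ) is the assignment-invariant adjusted response of cluster j. -/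

import Mathlib

open Finset
open scoped Classical

/-- Under monotonicity, the exclusion restriction, and the homogeneity null `H_00`, the
null distribution of the adjusted difference-in-means statistic `T(τ_0)` is exactly the
permutation distribution of the assignment-invariant adjusted responses `A_j(τ_0)`. -/
theorem stmt14
    (J m : ℕ) (hm0 : 0 < m) (hmJ : m < J)
    (n : Fin J → ℕ) (hn : ∀ j, 1 ≤ n j)
    -- potential compliances and potential outcomes (exclusion restriction:
    -- outcomes depend only on the treatment received)
    (D1 D0 : (j : Fin J) → Fin (n j) → Bool)
    (Y : (j : Fin J) → Fin (n j) → Bool → ℝ)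
    -- monotonicity: no defiers
    (mono : ∀ j i, D0 j i = true → D1 j i = true)
    (nCO : Fin J → ℕ)
    (hnCO : ∀ j, nCO j =
      (univ.filter (fun i => D1 j i = true ∧ D0 j i = false)).card)
    (hnCO1 : ∀ j, 1 ≤ nCO j)
    -- cluster-level CACEs and the homogeneity null hypothesis H_00
    (τc : Fin J → ℝ)
    (hτc : ∀ j, τc j =
      (∑ i ∈ univ.filter (fun i => D1 j i = true ∧ D0 j i = false),
        (Y j i true - Y j i false)) / nCO j)
    (τ0 : ℝ) (H00 : ∀ j, τc j = τ0)
    -- the test statistic computed from the observed cluster totals under assignment s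
    (T : Finset (Fin J) → ℝ)
    (hT : ∀ s, T s =
      (∑ j ∈ s, ((∑ i, Y j i (D1 j i)) -
        τ0 * ∑ i, (if D1 j i then (1 : ℝ) else 0))) / m -
      (∑ j ∈ sᶜ, ((∑ i, Y j i (D0 j i)) -
        τ0 * ∑ i, (if D0 j i then (1 : ℝ) else 0))) / ((J : ℝ) - m))
    -- the assignment-invariant adjusted responses
    (A : Fin J → ℝ)
    (hA : ∀ j, A j = (∑ i, Y j i (D1 j i)) -
      τ0 * ∑ i, (if D1 j i then (1 : ℝ) else 0)) :
    ∀ t : ℝ,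
      ((((univ : Finset (Finset (Fin J))).filter
          (fun s => s.card = m ∧ T s ≤ t)).card : ℝ) / (J.choose m)) =
      ((((univ : Finset (Finset (Fin J))).filter
          (fun s => s.card = m ∧
            (∑ j ∈ s, A j) / m - (∑ j ∈ sᶜ, A j) / ((J : ℝ) - m) ≤ t)).card : ℝ) /
        (J.choose m)) := by
  have key : ∀ j : Fin J,
      (∑ i, Y j i (D0 j i)) - τ0 * ∑ i, (if D0 j i then (1 : ℝ) else 0) = A j := by
    intro j
    have hCne : (nCO j : ℝ) ≠ 0 := by
      have := hnCO1 j; positivity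
    have hsum : ∑ i ∈ univ.filter (fun i => D1 j i = true ∧ D0 j i = false),
        (Y j i true - Y j i false) = τ0 * nCO j := by
      have h := (hτc j).symm.trans (H00 j)
      field_simp at h
      rw [Finset.sum_sub_distrib] at h ⊢
      linarith [h]
    have hsplit1 : (∑ i, Y j i (D1 j i)) - (∑ i, Y j i (D0 j i))
        = ∑ i ∈ univ.filter (fun i => D1 j i = true ∧ D0 j i = false),
          (Y j i true - Y j i false) := by
      rw [← Finset.sum_sub_distrib,
        ← Finset.sum_filter_add_sum_filter_not univ
          (fun i => D1 j i = true ∧ D0 j i = false)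
          (fun i => Y j i (D1 j i) - Y j i (D0 j i))]
      have h1 : ∑ i ∈ univ.filter (fun i => D1 j i = true ∧ D0 j i = false),
          (Y j i (D1 j i) - Y j i (D0 j i))
          = ∑ i ∈ univ.filter (fun i => D1 j i = true ∧ D0 j i = false),
            (Y j i true - Y j i false) := by
        apply Finset.sum_congr rfl
        intro i hi
        simp only [Finset.mem_filter] at hi
        rw [hi.2.1, hi.2.2]
      have h2 : ∑ i ∈ univ.filter (fun i => ¬(D1 j i = true ∧ D0 j i = false)),
          (Y j i (D1 j i) - Y j i (D0 j i)) = 0 := by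
        apply Finset.sum_eq_zero
        intro i hi
        simp only [Finset.mem_filter] at hi
        have : D1 j i = D0 j i := by
          cases h0 : D0 j i
          · cases h1' : D1 j i
            · rfl
            · exact absurd ⟨h1', h0⟩ hi.2
          · rw [mono j i h0]
        rw [this]; ring
      rw [h1, h2, add_zero]
    have hsplit2 : (∑ i, (if D1 j i then (1 : ℝ) else 0))
        - (∑ i, (if D0 j i then (1 : ℝ) else 0)) = (nCO j : ℝ) := by
      rw [← Finset.sum_sub_distrib,
        ← Finset.sum_filter_add_sum_filter_not univ
          (fun i => D1 j i = true ∧ D0 j i = false)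
          (fun i => (if D1 j i then (1 : ℝ) else 0) - (if D0 j i then (1 : ℝ) else 0))]
      have h1 : ∑ i ∈ univ.filter (fun i => D1 j i = true ∧ D0 j i = false),
          ((if D1 j i then (1 : ℝ) else 0) - (if D0 j i then (1 : ℝ) else 0))
          = (nCO j : ℝ) := by
        rw [hnCO j]
        rw [Finset.card_eq_sum_ones]
        push_cast
        apply Finset.sum_congr rfl
        intro i hi
        simp only [Finset.mem_filter] at hi
        rw [hi.2.1, hi.2.2]
        simp
      have h2 : ∑ i ∈ univ.filter (fun i => ¬(D1 j i = true ∧ D0 j i = false)),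
          ((if D1 j i then (1 : ℝ) else 0) - (if D0 j i then (1 : ℝ) else 0)) = 0 := by
        apply Finset.sum_eq_zero
        intro i hi
        simp only [Finset.mem_filter] at hi
        have : D1 j i = D0 j i := by
          cases h0 : D0 j i
          · cases h1' : D1 j i
            · rfl
            · exact absurd ⟨h1', h0⟩ hi.2
          · rw [mono j i h0]
        rw [this]; ring
      rw [h1, h2, add_zero]
    rw [hA]
    have h2' : τ0 * (((∑ i, (if D1 j i then (1 : ℝ) else 0))
        - (∑ i, (if D0 j i then (1 : ℝ) else 0)))) = τ0 * (nCO j : ℝ) := by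
      rw [hsplit2]
    rw [mul_sub] at h2'
    linarith [hsplit1, hsum, h2']
  have hfe : ∀ s : Finset (Fin J),
      T s = (∑ j ∈ s, A j) / m - (∑ j ∈ sᶜ, A j) / ((J : ℝ) - m) := by
    intro s
    rw [hT]
    congr 1
    · congr 1
      exact Finset.sum_congr rfl fun j _ => (hA j).symm
    · congr 1
      exact Finset.sum_congr rfl fun j _ => key j
  intro t
  simp only [hfe]
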